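/- Let U ⊆ ℂ be open and let v, u : U → ℂ be differentiable functions with v(t) ≠ 0 for all t ∈ U, satisfying system (6) on U. Define ṽ(t) := −v(t) and ũ(t) := −(u(t) − t/v(t)² − 4/v(t)⁶). Then (ṽ, ũ) is differentiable and again satisfies system (6) on U; moreover the transformation (v, u) ↦ (ṽ, ũ) is an involution: applying it twice returns (v, u). (This is the birational symmetry s₁|_{a=−1} of system (6).) -/

import Mathlib

set_option maxHeartbeats 2000000


/-- The birational symmetry s₁|_{a=−1} : (v, u) ↦ (−v, −(u − t/v² − 4/v⁶)) of system (6):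
it takes solutions to solutions and is an involution. -/
theorem symmetry_s1_of_system6
    (U : Set ℂ) (hU : IsOpen U) (v u : ℂ → ℂ)
    (hv : ∀ t ∈ U, DifferentiableAt ℂ v t) (hu : ∀ t ∈ U, DifferentiableAt ℂ u t)
    (hvne : ∀ t ∈ U, v t ≠ 0)
    (hsys1 : ∀ t ∈ U, deriv v t =
      1 + (t / 4) * (v t) ^ 4 + (1 / 4) * (v t) ^ 5 - (1 / 2) * (v t) ^ 6 * u t)
    (hsys2 : ∀ t ∈ U, deriv u t =
      (1 / 8) * t ^ 2 * v t + (3 / 8) * t * (v t) ^ 2 - (t * u t - 1 / 4) * (v t) ^ 3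
        - (5 / 4) * (v t) ^ 4 * u t + (3 / 2) * (v t) ^ 5 * (u t) ^ 2)
    (vt ut : ℂ → ℂ)
    (hvt : ∀ t, vt t = -(v t))
    (hut : ∀ t, ut t = -(u t - t / (v t) ^ 2 - 4 / (v t) ^ 6)) :
    (∀ t ∈ U, DifferentiableAt ℂ vt t) ∧ (∀ t ∈ U, DifferentiableAt ℂ ut t) ∧
    (∀ t ∈ U, deriv vt t =
      1 + (t / 4) * (vt t) ^ 4 + (1 / 4) * (vt t) ^ 5 - (1 / 2) * (vt t) ^ 6 * ut t) ∧
    (∀ t ∈ U, deriv ut t =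
      (1 / 8) * t ^ 2 * vt t + (3 / 8) * t * (vt t) ^ 2 - (t * ut t - 1 / 4) * (vt t) ^ 3
        - (5 / 4) * (vt t) ^ 4 * ut t + (3 / 2) * (vt t) ^ 5 * (ut t) ^ 2) ∧
    (∀ t ∈ U, -(vt t) = v t ∧ -(ut t - t / (vt t) ^ 2 - 4 / (vt t) ^ 6) = u t) := by
  have hvfun : vt = fun s => -(v s) := funext hvt
  have hufun : ut = fun s => -(u s - s / (v s) ^ 2 - 4 / (v s) ^ 6) := funext hut
  -- derivative data at each point of U
  have key : ∀ t ∈ U,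
      HasDerivAt v (1 + (t / 4) * (v t) ^ 4 + (1 / 4) * (v t) ^ 5
        - (1 / 2) * (v t) ^ 6 * u t) t ∧
      HasDerivAt u ((1 / 8) * t ^ 2 * v t + (3 / 8) * t * (v t) ^ 2
        - (t * u t - 1 / 4) * (v t) ^ 3 - (5 / 4) * (v t) ^ 4 * u t
        + (3 / 2) * (v t) ^ 5 * (u t) ^ 2) t := by
    intro t ht
    constructor
    · simpa [hsys1 t ht] using (hv t ht).hasDerivAt
    · simpa [hsys2 t ht] using (hu t ht).hasDerivAt
  have hdvt : ∀ t ∈ U, DifferentiableAt ℂ vt t := by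
    intro t ht
    rw [hvfun]
    exact (hv t ht).neg
  have hdut : ∀ t ∈ U, DifferentiableAt ℂ ut t := by
    intro t ht
    rw [hufun]
    have h2 : (v t) ^ 2 ≠ 0 := pow_ne_zero _ (hvne t ht)
    have h6 : (v t) ^ 6 ≠ 0 := pow_ne_zero _ (hvne t ht)
    exact (((hu t ht).sub ((differentiableAt_id.div ((hv t ht).pow 2) h2))).sub
      ((differentiableAt_const (4:ℂ)).div ((hv t ht).pow 6) h6)).neg
  refine ⟨hdvt, hdut, ?_, ?_, ?_⟩
  · intro t ht
    obtain ⟨hv', _⟩ := key t ht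
    have : deriv vt t = -(1 + (t / 4) * (v t) ^ 4 + (1 / 4) * (v t) ^ 5
        - (1 / 2) * (v t) ^ 6 * u t) := by
      rw [hvfun]; exact hv'.neg.deriv
    rw [this, hvt t, hut t]
    have h2 : (v t) ^ 2 ≠ 0 := pow_ne_zero _ (hvne t ht)
    have h6 : (v t) ^ 6 ≠ 0 := pow_ne_zero _ (hvne t ht)
    have h0 : v t ≠ 0 := hvne t ht
    field_simp
    ring
  · intro t ht
    obtain ⟨hv', hu'⟩ := key t ht
    set V' := 1 + (t / 4) * (v t) ^ 4 + (1 / 4) * (v t) ^ 5 - (1 / 2) * (v t) ^ 6 * u t with hV'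
    set U' := (1 / 8) * t ^ 2 * v t + (3 / 8) * t * (v t) ^ 2
        - (t * u t - 1 / 4) * (v t) ^ 3 - (5 / 4) * (v t) ^ 4 * u t
        + (3 / 2) * (v t) ^ 5 * (u t) ^ 2 with hU'
    have hvne' := hvne t ht
    have h2 : (v t) ^ 2 ≠ 0 := pow_ne_zero _ hvne'
    have h6 : (v t) ^ 6 ≠ 0 := pow_ne_zero _ hvne'
    have h1 : HasDerivAt (fun s => id s / (v s) ^ 2)
        ((1 * (v t) ^ 2 - id t * ((2:ℕ) * (v t) ^ (2 - 1) * V')) / ((v t) ^ 2) ^ 2) t :=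
      (hasDerivAt_id t).div (hv'.pow 2) h2
    have h4 : HasDerivAt (fun s => (4:ℂ) / (v s) ^ 6)
        ((0 * (v t) ^ 6 - 4 * ((6:ℕ) * (v t) ^ (6 - 1) * V')) / ((v t) ^ 6) ^ 2) t :=
      (hasDerivAt_const t (4:ℂ)).div (hv'.pow 6) h6
    have hut' : HasDerivAt ut (-(U'
        - (1 * (v t) ^ 2 - id t * ((2:ℕ) * (v t) ^ (2 - 1) * V')) / ((v t) ^ 2) ^ 2
        - (0 * (v t) ^ 6 - 4 * ((6:ℕ) * (v t) ^ (6 - 1) * V')) / ((v t) ^ 6) ^ 2)) t := by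
      rw [hufun]
      exact ((hu'.sub h1).sub h4).neg
    rw [hut'.deriv, hvt t, hut t, hV', hU']
    simp only [id]
    norm_num
    have hw : v t * (v t)⁻¹ = 1 := mul_inv_cancel₀ (hvne t ht)
    linear_combination (exp := 1) ((2 : ℂ) * (v t) * (v t)⁻¹ ^ 4 * t
      + (3/4 : ℂ) * (v t) ^ 2 * t
      + (-1 : ℂ) * (v t) ^ 2 * (v t)⁻¹ ^ 4
      + (2 : ℂ) * (v t) ^ 2 * (v t)⁻¹ ^ 5 * t
      + (-2 : ℂ) * (v t) ^ 3 * (u t) * t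
      + (3/4 : ℂ) * (v t) ^ 3 * (v t)⁻¹ * t
      + (1 : ℂ) * (v t) ^ 3 * (v t)⁻¹ ^ 2 * t ^ 2
      + (-1 : ℂ) * (v t) ^ 3 * (v t)⁻¹ ^ 5
      + (6 : ℂ) * (v t) ^ 3 * (v t)⁻¹ ^ 6 * t
      + (-2 : ℂ) * (v t) ^ 4 * (v t)⁻¹ * (u t) * t
      + (-1/2 : ℂ) * (v t) ^ 4 * (v t)⁻¹ ^ 2 * t
      + (1 : ℂ) * (v t) ^ 4 * (v t)⁻¹ ^ 3 * t ^ 2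
      + (-6 : ℂ) * (v t) ^ 4 * (v t)⁻¹ ^ 6
      + (6 : ℂ) * (v t) ^ 4 * (v t)⁻¹ ^ 7 * t
      + (1 : ℂ) * (v t) ^ 5 * (v t)⁻¹ ^ 2 * (u t) * t
      + (-1/2 : ℂ) * (v t) ^ 5 * (v t)⁻¹ ^ 3 * t
      + (12 : ℂ) * (v t) ^ 5 * (v t)⁻¹ ^ 6 * (u t)
      + (-6 : ℂ) * (v t) ^ 5 * (v t)⁻¹ ^ 7
      + (-6 : ℂ) * (v t) ^ 5 * (v t)⁻¹ ^ 8 * t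
      + (1 : ℂ) * (v t) ^ 6 * (v t)⁻¹ ^ 3 * (u t) * t
      + (12 : ℂ) * (v t) ^ 6 * (v t)⁻¹ ^ 7 * (u t)
      + (-6 : ℂ) * (v t) ^ 6 * (v t)⁻¹ ^ 8
      + (-6 : ℂ) * (v t) ^ 6 * (v t)⁻¹ ^ 9 * t
      + (12 : ℂ) * (v t) ^ 7 * (v t)⁻¹ ^ 8 * (u t)
      + (-6 : ℂ) * (v t) ^ 7 * (v t)⁻¹ ^ 9
      + (-6 : ℂ) * (v t) ^ 7 * (v t)⁻¹ ^ 10 * t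
      + (12 : ℂ) * (v t) ^ 8 * (v t)⁻¹ ^ 9 * (u t)
      + (-6 : ℂ) * (v t) ^ 8 * (v t)⁻¹ ^ 10
      + (-6 : ℂ) * (v t) ^ 8 * (v t)⁻¹ ^ 11 * t
      + (12 : ℂ) * (v t) ^ 9 * (v t)⁻¹ ^ 10 * (u t)
      + (-6 : ℂ) * (v t) ^ 9 * (v t)⁻¹ ^ 11
      + (12 : ℂ) * (v t) ^ 10 * (v t)⁻¹ ^ 11 * (u t)) * hw
  · intro t ht
    refine ⟨by rw [hvt t]; ring, ?_⟩
    rw [hvt t, hut t]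
    ring_nf
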